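/- Let G be a residually finite FC-group whose derived subgroup G' is finite. Then the center Z(G) has finite index in G. -/

import Mathlib

/-- A residually finite FC-group with finite derived subgroup has center of finite index. -/
theorem center_finiteIndex_of_residuallyFinite_fc {G : Type*} [Group G]
    (hFC : ∀ g : G, (Subgroup.centralizer {g}).FiniteIndex)
    (hres : ∀ g : G, g ≠ 1 → ∃ N : Subgroup G, N.Normal ∧ N.FiniteIndex ∧ g ∉ N)
    (hcomm : (commutator G : Set G).Finite) :
    (Subgroup.center G).FiniteIndex := by
  classical
  set S : Set G := (commutator G : Set G) \ {1} with hS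
  have hSfin : S.Finite := hcomm.diff
  haveI : Finite S := hSfin
  choose N hNnorm hNfi hNnotmem using fun c : S => hres c.1 (by exact c.2.2)
  set K : Subgroup G := ⨅ c : S, N c with hK
  haveI : K.FiniteIndex := Subgroup.finiteIndex_iInf fun c => hNfi c
  open scoped commutatorElement in
  have hKle : K ≤ Subgroup.center G := by
    intro k hk
    rw [Subgroup.mem_center_iff]
    intro g
    by_contra hne
    have hc1 : ⁅k, g⁆ ≠ 1 := by
      intro h
      exact hne (by
        have := (commutatorElement_eq_one_iff_commute.mp h)
        exact this.symm)
    set c : S := ⟨⁅k, g⁆, ⟨Subgroup.commutator_mem_commutator (Subgroup.mem_top k)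
        (Subgroup.mem_top g), hc1⟩⟩
    have hkN : k ∈ N c := (Subgroup.mem_iInf.mp hk) c
    have : ⁅k, g⁆ ∈ N c := by
      haveI := hNnorm c
      have h1 : g * k⁻¹ * g⁻¹ ∈ N c := Subgroup.Normal.conj_mem (hNnorm c) _ (inv_mem hkN) g
      have : k * (g * k⁻¹ * g⁻¹) ∈ N c := mul_mem hkN h1
      simpa [commutatorElement_def, mul_assoc] using this
    exact hNnotmem c this
  exact Subgroup.finiteIndex_of_le hKle
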